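/- Let f be a strongly connected MSP and let x satisfy 0 ≤ x ≺ μf (strictly below the least fixed point in every component). Then the spectral radius of the Jacobian f'(x) is strictly less than 1; in particular the matrix Id − f'(x) is invertible and (Id − f'(x))^{−1} = Σ_{k≥0} f'(x)^k. -/

import Mathlib

open MvPolynomial Matrix

noncomputable def mspEval {n : ℕ} (F : Fin n → MvPolynomial (Fin n) ℝ)
    (x : Fin n → ℝ) : Fin n → ℝ :=
  fun i => eval x (F i)

def mspNonneg {n : ℕ} (F : Fin n → MvPolynomial (Fin n) ℝ) : Prop :=
  ∀ i m, 0 ≤ coeff m (F i)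

noncomputable def kleeneSeq {n : ℕ} (F : Fin n → MvPolynomial (Fin n) ℝ) (k : ℕ) :
    Fin n → ℝ :=
  (mspEval F)^[k] 0

def mspClean {n : ℕ} (F : Fin n → MvPolynomial (Fin n) ℝ) : Prop :=
  ∀ i, ∃ k, 0 < kleeneSeq F k i

noncomputable def mspJac {n : ℕ} (F : Fin n → MvPolynomial (Fin n) ℝ)
    (x : Fin n → ℝ) : Matrix (Fin n) (Fin n) ℝ :=
  Matrix.of fun i j => eval x (pderiv j (F i))

def mspDep {n : ℕ} (F : Fin n → MvPolynomial (Fin n) ℝ) (i k : Fin n) : Prop :=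
  pderiv k (F i) ≠ 0

def mspStronglyConnected {n : ℕ} (F : Fin n → MvPolynomial (Fin n) ℝ) : Prop :=
  ∀ i k, Relation.ReflTransGen (mspDep F) i k

/-- `l : ℂ` is an eigenvalue of the real matrix `A`. -/
def hasComplexEigenvalue {n : ℕ} (A : Matrix (Fin n) (Fin n) ℝ) (l : ℂ) : Prop :=
  ∃ v : Fin n → ℂ, v ≠ 0 ∧ (A.map (algebraMap ℝ ℂ)).mulVec v = l • v


-- P1
lemma evalNonneg {n : ℕ} {p : MvPolynomial (Fin n) ℝ}
    (hp : ∀ m, 0 ≤ coeff m p) {x : Fin n → ℝ} (hx : ∀ i, 0 ≤ x i) : 0 ≤ eval x p := by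
  rw [eval_eq]
  exact Finset.sum_nonneg fun m _ =>
    mul_nonneg (hp m) (Finset.prod_nonneg fun j _ => pow_nonneg (hx j) _)

-- P2
lemma evalMono {n : ℕ} {p : MvPolynomial (Fin n) ℝ}
    (hp : ∀ m, 0 ≤ coeff m p) {a b : Fin n → ℝ} (ha : ∀ i, 0 ≤ a i) (hab : ∀ i, a i ≤ b i) :
    eval a p ≤ eval b p := by
  rw [eval_eq, eval_eq]
  refine Finset.sum_le_sum fun m _ => ?_
  refine mul_le_mul_of_nonneg_left ?_ (hp m)
  refine Finset.prod_le_prod (fun j _ => pow_nonneg (ha j) _) fun j _ =>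
    pow_le_pow_left₀ (ha j) (hab j) _

-- P3
lemma evalPos {n : ℕ} {p : MvPolynomial (Fin n) ℝ}
    (hp : ∀ m, 0 ≤ coeff m p) (hp0 : p ≠ 0) {x : Fin n → ℝ} (hx : ∀ i, 0 < x i) :
    0 < eval x p := by
  rw [eval_eq]
  obtain ⟨m0, hm0⟩ := Finset.nonempty_iff_ne_empty.2
    (fun h => hp0 (MvPolynomial.support_eq_empty.1 h))
  refine Finset.sum_pos' (fun m _ => mul_nonneg (hp m)
    (Finset.prod_nonneg fun j _ => pow_nonneg (hx j).le _)) ⟨m0, hm0, ?_⟩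
  refine mul_pos (lt_of_le_of_ne (hp m0) (Ne.symm (MvPolynomial.mem_support_iff.1 hm0)))
    (Finset.prod_pos fun j _ => pow_pos (hx j) _)

-- P4
lemma pderivNonneg {n : ℕ} {p : MvPolynomial (Fin n) ℝ}
    (hp : ∀ m, 0 ≤ coeff m p) (j : Fin n) : ∀ m, 0 ≤ coeff m (pderiv j p) := by
  intro m
  conv_rhs => rw [show p = ∑ v ∈ p.support, monomial v (coeff v p) from
    (support_sum_monomial_coeff p).symm]
  rw [map_sum, coeff_sum]
  refine Finset.sum_nonneg fun v _ => ?_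
  rw [pderiv_monomial, coeff_monomial]
  split
  · exact mul_nonneg (hp v) (Nat.cast_nonneg _)
  · exact le_refl 0

-- P1
-- P5
lemma hasDerivAt_eval_line {n : ℕ} (p : MvPolynomial (Fin n) ℝ) (a d : Fin n → ℝ) (t : ℝ) :
    HasDerivAt (fun t : ℝ => eval (fun i => a i + t * d i) p)
      (∑ j, d j * eval (fun i => a i + t * d i) (pderiv j p)) t := by
  induction p using MvPolynomial.induction_on with
  | C c =>
      simp only [eval_C, pderiv_C, map_zero, mul_zero, Finset.sum_const_zero]
      exact hasDerivAt_const t c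
  | add p q hp hq =>
      simp only [map_add, eval_add, mul_add, Finset.sum_add_distrib]
      exact hp.add hq
  | mul_X p j hp =>
      have hx : HasDerivAt (fun t : ℝ => a j + t * d j) (d j) t :=
        (hasDerivAt_mul_const (d j)).const_add (a j)
      have heq : (∑ x, d x * eval (fun i => a i + t * d i) (pderiv x (p * X j)))
          = (∑ x, d x * eval (fun i => a i + t * d i) (pderiv x p)) * (a j + t * d j)
            + eval (fun i => a i + t * d i) p * d j := by
        have hterm : ∀ x : Fin n, d x * eval (fun i => a i + t * d i) (pderiv x (p * X j))
            = (d x * eval (fun i => a i + t * d i) (pderiv x p)) * (a j + t * d j)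
              + (if j = x then eval (fun i => a i + t * d i) p * d j else 0) := by
          intro x
          simp only [Derivation.leibniz, pderiv_X, Pi.single_apply, smul_eq_mul, map_add,
            eval_mul, eval_X, apply_ite (eval fun i => a i + t * d i), _root_.map_one, map_zero]
          split
          · next h => subst h; ring
          · ring
        rw [Finset.sum_congr rfl fun x _ => hterm x, Finset.sum_add_distrib, ← Finset.sum_mul,
          Finset.sum_ite_eq, if_pos (Finset.mem_univ j)]
      rw [heq]
      simp only [eval_mul, eval_X]
      exact hp.mul hx

-- P6
lemma taylorLB {n : ℕ} {p : MvPolynomial (Fin n) ℝ} (hp : ∀ m, 0 ≤ coeff m p)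
    {a b : Fin n → ℝ} (ha : ∀ i, 0 ≤ a i) (hab : ∀ i, a i ≤ b i) :
    eval a p + ∑ j, eval a (pderiv j p) * (b j - a j) ≤ eval b p := by
  set d : Fin n → ℝ := fun i => b i - a i with hd
  have hd0 : ∀ i, 0 ≤ d i := fun i => sub_nonneg.2 (hab i)
  set K : ℝ := ∑ j, eval a (pderiv j p) * (b j - a j) with hK
  set h : ℝ → ℝ := fun t => eval (fun i => a i + t * d i) p - K * t with hh
  have hderiv : ∀ t : ℝ, HasDerivAt h
      ((∑ j, d j * eval (fun i => a i + t * d i) (pderiv j p)) - K) t := by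
    intro t
    have h2 : HasDerivAt (fun y : ℝ => K * y) K t := by
      simpa using (hasDerivAt_id t).const_mul K
    exact (hasDerivAt_eval_line p a d t).sub h2
  have hnn : ∀ t : ℝ, 0 ≤ t →
      0 ≤ (∑ j, d j * eval (fun i => a i + t * d i) (pderiv j p)) - K := by
    intro t ht
    rw [sub_nonneg, hK]
    refine le_trans (le_of_eq (Finset.sum_congr rfl fun j _ => mul_comm _ _)) ?_
    refine Finset.sum_le_sum fun j _ => ?_
    refine mul_le_mul_of_nonneg_left ?_ (hd0 j)
    refine evalMono (pderivNonneg hp j) ha fun i => ?_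
    exact le_add_of_nonneg_right (mul_nonneg ht (hd0 i))
  have hmono : MonotoneOn h (Set.Icc (0:ℝ) 1) := by
    refine monotoneOn_of_deriv_nonneg (convex_Icc 0 1) ?_ ?_ ?_
    · exact (continuous_iff_continuousAt.2 fun t =>
        (hderiv t).differentiableAt.continuousAt).continuousOn
    · exact fun t _ => ((hderiv t).differentiableAt).differentiableWithinAt
    · intro t ht
      rw [(hderiv t).deriv]
      have ht' : (0:ℝ) < t := by
        rw [interior_Icc] at ht; exact ht.1
      exact hnn t ht'.le
  have h01 := hmono (Set.left_mem_Icc.2 zero_le_one) (Set.right_mem_Icc.2 zero_le_one)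
    zero_le_one
  rw [hh] at h01
  simp only [mul_zero, mul_one, sub_zero] at h01
  have hg0 : (fun i => a i + (0:ℝ) * d i) = a := by funext i; simp
  have hg1 : (fun i => a i + (1:ℝ) * d i) = b := by funext i; simp [hd]
  rw [hg0, hg1] at h01
  linarith [h01]
section MSP
variable {n : ℕ} {F : Fin n → MvPolynomial (Fin n) ℝ} {μ : Fin n → ℝ}

lemma mspEval_nonneg (hF : mspNonneg F) {x : Fin n → ℝ} (hx : ∀ i, 0 ≤ x i) :
    ∀ i, 0 ≤ mspEval F x i := fun i => evalNonneg (hF i) hx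

lemma mspEval_mono (hF : mspNonneg F) {a b : Fin n → ℝ} (ha : ∀ i, 0 ≤ a i)
    (hab : ∀ i, a i ≤ b i) : ∀ i, mspEval F a i ≤ mspEval F b i :=
  fun i => evalMono (hF i) ha hab

lemma kleene_succ (F : Fin n → MvPolynomial (Fin n) ℝ) (k : ℕ) :
    kleeneSeq F (k+1) = mspEval F (kleeneSeq F k) := by
  unfold kleeneSeq; rw [Function.iterate_succ_apply']

lemma kleene_nonneg (hF : mspNonneg F) : ∀ k i, 0 ≤ kleeneSeq F k i := by
  intro k; induction k with
  | zero => intro i; simp [kleeneSeq]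
  | succ k ih => rw [kleene_succ]; exact mspEval_nonneg hF ih

lemma kleene_le_mu (hF : mspNonneg F) (hμ0 : 0 ≤ μ) (hfix : mspEval F μ = μ) :
    ∀ k i, kleeneSeq F k i ≤ μ i := by
  intro k; induction k with
  | zero => intro i; simpa [kleeneSeq] using hμ0 i
  | succ k ih =>
      intro i
      rw [kleene_succ]
      calc mspEval F (kleeneSeq F k) i ≤ mspEval F μ i :=
            mspEval_mono hF (kleene_nonneg hF k) ih i
        _ = μ i := by rw [hfix]

lemma kleene_mono (hF : mspNonneg F) : ∀ i, Monotone fun k => kleeneSeq F k i := by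
  have hstep : ∀ k i, kleeneSeq F k i ≤ kleeneSeq F (k+1) i := by
    intro k; induction k with
    | zero => intro i; simpa [kleeneSeq] using kleene_nonneg hF 1 i
    | succ k ih =>
        intro i
        rw [kleene_succ, kleene_succ]
        exact mspEval_mono hF (kleene_nonneg hF k) ih i
  exact fun i => monotone_nat_of_le_succ fun k => hstep k i

lemma kleene_reaches (hF : mspNonneg F) (hμ0 : 0 ≤ μ) (hfix : mspEval F μ = μ)
    (hleast : ∀ y : Fin n → ℝ, 0 ≤ y → mspEval F y = y → μ ≤ y)
    {z : Fin n → ℝ} (hz : ∀ i, z i < μ i) :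
    ∃ k, ∀ i, z i < kleeneSeq F k i := by
  have hbdd : ∀ i, BddAbove (Set.range fun k => kleeneSeq F k i) := fun i =>
    ⟨μ i, by rintro r ⟨k, rfl⟩; exact kleene_le_mu hF hμ0 hfix k i⟩
  set L : Fin n → ℝ := fun i => ⨆ k, kleeneSeq F k i with hL
  have htend : ∀ i, Filter.Tendsto (fun k => kleeneSeq F k i) Filter.atTop (nhds (L i)) :=
    fun i => tendsto_atTop_ciSup (kleene_mono hF i) (hbdd i)
  have htendv : Filter.Tendsto (fun k => kleeneSeq F k) Filter.atTop (nhds L) :=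
    tendsto_pi_nhds.2 htend
  have htsh : Filter.Tendsto (fun k => kleeneSeq F (k+1)) Filter.atTop (nhds L) :=
    htendv.comp (Filter.tendsto_add_atTop_nat 1)
  have hc : Continuous (mspEval F) := continuous_pi fun i => MvPolynomial.continuous_eval (F i)
  have htend2 : Filter.Tendsto (fun k => kleeneSeq F (k+1)) Filter.atTop (nhds (mspEval F L)) := by
    have := (hc.tendsto L).comp htendv
    simpa [Function.comp_def, kleene_succ] using this
  have hfixL : mspEval F L = L := tendsto_nhds_unique htend2 htsh
  have hL0 : (0:Fin n → ℝ) ≤ L := by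
    intro i
    calc (0:ℝ) ≤ kleeneSeq F 0 i := by simp [kleeneSeq]
      _ ≤ L i := le_ciSup (hbdd i) 0
  have hLμ : L = μ := by
    funext i
    exact le_antisymm (ciSup_le fun k => kleene_le_mu hF hμ0 hfix k i) (hleast L hL0 hfixL i)
  have hex : ∀ i, ∃ k, z i < kleeneSeq F k i := by
    intro i
    have : z i < L i := by rw [hLμ]; exact hz i
    exact exists_lt_of_lt_ciSup this
  choose ki hki using hex
  refine ⟨Finset.univ.sup ki, fun i => ?_⟩
  exact lt_of_lt_of_le (hki i) (kleene_mono hF i (Finset.le_sup (Finset.mem_univ i)))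

end MSP


lemma pow_mulVec_nonneg {n : ℕ} {M : Matrix (Fin n) (Fin n) ℝ} (hM0 : ∀ i j, 0 ≤ M i j)
    {u : Fin n → ℝ} (hu0 : ∀ i, 0 ≤ u i) (l : ℕ) : ∀ i, 0 ≤ (M ^ l).mulVec u i := by
  induction l with
  | zero => simpa [Matrix.one_mulVec] using hu0
  | succ l ih =>
      intro i
      rw [pow_succ', ← Matrix.mulVec_mulVec]
      simp only [Matrix.mulVec, dotProduct]
      exact Finset.sum_nonneg fun j _ => mul_nonneg (hM0 i j) (ih j)

lemma zeroProp {n : ℕ} {R : Fin n → Fin n → Prop} {M : Matrix (Fin n) (Fin n) ℝ}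
    (hM0 : ∀ i j, 0 ≤ M i j) (hedge : ∀ i j, R i j → 0 < M i j)
    {w : Fin n → ℝ} (hw0 : ∀ i, 0 ≤ w i) (hMw : ∀ i, M.mulVec w i ≤ w i)
    {i j : Fin n} (hpath : Relation.ReflTransGen R i j) (hwi : w i = 0) : w j = 0 := by
  induction hpath with
  | refl => exact hwi
  | @tail b c h1 h2 ih =>
      have hsum : ∑ j, M b j * w j = 0 := by
        refine le_antisymm ?_ (Finset.sum_nonneg fun j _ => mul_nonneg (hM0 b j) (hw0 j))
        calc ∑ j, M b j * w j = M.mulVec w b := by simp [Matrix.mulVec, dotProduct]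
          _ ≤ w b := hMw b
          _ = 0 := ih
      have := (Finset.sum_eq_zero_iff_of_nonneg
        (fun j _ => mul_nonneg (hM0 b j) (hw0 j))).1 hsum c (Finset.mem_univ c)
      rcases mul_eq_zero.1 this with h | h
      · exact absurd h (ne_of_gt (hedge b c h2))
      · exact h

lemma posProp {n : ℕ} {R : Fin n → Fin n → Prop} {M : Matrix (Fin n) (Fin n) ℝ}
    (hM0 : ∀ i j, 0 ≤ M i j) (hedge : ∀ i j, R i j → 0 < M i j)
    {u : Fin n → ℝ} (hu0 : ∀ i, 0 ≤ u i) {i j0 : Fin n}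
    (hpath : Relation.ReflTransGen R i j0) (hu : 0 < u j0) :
    ∃ l, 0 < (M ^ l).mulVec u i := by
  induction hpath using Relation.ReflTransGen.head_induction_on with
  | refl => exact ⟨0, by simpa [Matrix.one_mulVec] using hu⟩
  | @head a b hab hbc ih =>
      obtain ⟨l, hl⟩ := ih
      refine ⟨l + 1, ?_⟩
      rw [pow_succ', ← Matrix.mulVec_mulVec]
      simp only [Matrix.mulVec, dotProduct]
      refine Finset.sum_pos' (fun j _ => mul_nonneg (hM0 a j) (pow_mulVec_nonneg hM0 hu0 l j))
        ⟨b, Finset.mem_univ b, mul_pos (hedge a b hab) hl⟩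

lemma existsContraction {n : ℕ} {R : Fin n → Fin n → Prop} {M : Matrix (Fin n) (Fin n) ℝ}
    (hM0 : ∀ i j, 0 ≤ M i j) (hedge : ∀ i j, R i j → 0 < M i j)
    (hsc : ∀ i k, Relation.ReflTransGen R i k)
    {w : Fin n → ℝ} (hw : ∀ i, 0 < w i) (hMw : ∀ i, M.mulVec w i ≤ w i)
    {i0 : Fin n} (hstrict : M.mulVec w i0 < w i0) :
    ∃ (v : Fin n → ℝ) (s : ℝ), (∀ i, 0 < v i) ∧ 0 ≤ s ∧ s < 1 ∧
      ∀ i, M.mulVec v i ≤ s * v i := by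
  set u : Fin n → ℝ := fun i => w i - M.mulVec w i with hu
  have hu0 : ∀ i, 0 ≤ u i := fun i => sub_nonneg.2 (hMw i)
  have hui0 : 0 < u i0 := sub_pos.2 hstrict
  have hex : ∀ i, ∃ l, 0 < (M ^ l).mulVec u i := fun i => posProp hM0 hedge hu0 (hsc i i0) hui0
  choose lf hlf using hex
  set m : ℕ := Finset.univ.sup lf + 1 with hm
  have hm0 : 0 < m := Nat.succ_pos _
  set W : ℕ → Fin n → ℝ := fun k => (M ^ k).mulVec w with hW
  have hW0 : W 0 = w := by simp [hW, Matrix.one_mulVec]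
  have hWnn : ∀ k i, 0 ≤ W k i := fun k i => pow_mulVec_nonneg hM0 (fun i => (hw i).le) k i
  have hWsucc : ∀ k, W (k + 1) = M.mulVec (W k) := by
    intro k
    rw [hW]
    simp only
    rw [pow_succ', ← Matrix.mulVec_mulVec]
  -- telescoping
  have htel : ∀ i, w i - W m i = ∑ k ∈ Finset.range m, (M ^ k).mulVec u i := by
    intro i
    have hterm : ∀ k, (M ^ k).mulVec u i = W k i - W (k + 1) i := by
      intro k
      have h2 : (M ^ k).mulVec u = (M ^ k).mulVec w - (M ^ k).mulVec (M.mulVec w) := by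
        rw [← Matrix.mulVec_sub]
        congr 1
      have h3 : (M ^ k).mulVec (M.mulVec w) = W (k + 1) := by
        rw [Matrix.mulVec_mulVec, ← pow_succ, hW]
      rw [h2, h3]
      rfl
    rw [Finset.sum_congr rfl fun k _ => hterm k, Finset.sum_range_sub' (fun k => W k i) m, hW0]
  have hWlt : ∀ i, W m i < w i := by
    intro i
    have h1 : 0 < ∑ k ∈ Finset.range m, (M ^ k).mulVec u i := by
      refine Finset.sum_pos' (fun k _ => pow_mulVec_nonneg hM0 hu0 k i) ⟨lf i, ?_, hlf i⟩
      exact Finset.mem_range.2 (Nat.lt_succ_of_le (Finset.le_sup (Finset.mem_univ i)))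
    have := htel i
    linarith
  haveI : Nonempty (Fin n) := ⟨i0⟩
  obtain ⟨imax, _, hmax⟩ := Finset.exists_max_image Finset.univ (fun i => W m i / w i)
    ⟨i0, Finset.mem_univ i0⟩
  set c : ℝ := W m imax / w imax with hc
  have hc0 : 0 ≤ c := div_nonneg (hWnn m imax) (hw imax).le
  have hc1 : c < 1 := (div_lt_one (hw imax)).2 (hWlt imax)
  have hcw : ∀ i, W m i ≤ c * w i := by
    intro i
    have := hmax i (Finset.mem_univ i)
    exact (div_le_iff₀ (hw i)).1 this
  set s : ℝ := max (c ^ ((1:ℝ)/(m:ℝ))) (1/2) with hs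
  have hs0 : 0 < s := lt_of_lt_of_le (by norm_num) (le_max_right _ _)
  have hs1 : s < 1 := by
    refine max_lt ?_ (by norm_num)
    rcases eq_or_lt_of_le hc0 with h | h
    · rw [← h]
      rw [Real.zero_rpow (by positivity)]
      norm_num
    · exact Real.rpow_lt_one hc0 hc1 (by positivity)
  have hsm : c ≤ s ^ m := by
    have h1 : (c ^ ((1:ℝ)/(m:ℝ))) ^ m ≤ s ^ m :=
      pow_le_pow_left₀ (Real.rpow_nonneg hc0 _) (le_max_left _ _) m
    refine le_trans (le_of_eq ?_) h1
    rw [← Real.rpow_natCast (c ^ ((1:ℝ)/(m:ℝ))) m, ← Real.rpow_mul hc0]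
    rw [one_div, inv_mul_cancel₀ (by exact_mod_cast hm0.ne' : ((m:ℝ) ≠ 0)), Real.rpow_one]
  set v : Fin n → ℝ := fun i => ∑ k ∈ Finset.range m, s ^ (m - 1 - k) * W k i with hv
  have hvpos : ∀ i, 0 < v i := by
    intro i
    refine Finset.sum_pos' (fun k _ => mul_nonneg (pow_nonneg hs0.le _) (hWnn k i)) ?_
    exact ⟨0, Finset.mem_range.2 hm0, by
      rw [hW0]; exact mul_pos (pow_pos hs0 _) (hw i)⟩
  refine ⟨v, s, hvpos, hs0.le, hs1, ?_⟩
  intro i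
  set f : ℕ → ℝ := fun k => s ^ (m - k) * W k i with hf
  have hMv : M.mulVec v i = ∑ k ∈ Finset.range m, f (k + 1) := by
    have h1 : M.mulVec v i = ∑ j, M i j * ∑ k ∈ Finset.range m, s ^ (m - 1 - k) * W k j := rfl
    rw [h1]
    simp only [Finset.mul_sum]
    rw [Finset.sum_comm]
    refine Finset.sum_congr rfl fun k hk => ?_
    have hWk : W (k + 1) i = ∑ j, M i j * W k j := by rw [hWsucc]; rfl
    have h2 : f (k + 1) = s ^ (m - 1 - k) * ∑ j, M i j * W k j := by
      rw [hf, ← hWk]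
      simp only
      congr 2
      omega
    rw [h2, Finset.mul_sum]
    exact Finset.sum_congr rfl fun j _ => by ring
  have hsv : s * v i = ∑ k ∈ Finset.range m, f k := by
    rw [hv]
    simp only
    rw [Finset.mul_sum]
    refine Finset.sum_congr rfl fun k hk => ?_
    have hk' := Finset.mem_range.1 hk
    rw [hf]
    simp only
    rw [← mul_assoc, ← pow_succ']
    congr 2
    omega
  have hshift : ∑ k ∈ Finset.range m, f (k + 1) = (∑ k ∈ Finset.range m, f k) + f m - f 0 := by
    have h1 := Finset.sum_range_succ' f m
    have h2 := Finset.sum_range_succ f m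
    linarith
  have hfm : f m ≤ f 0 := by
    rw [hf]
    simp only [Nat.sub_self, pow_zero, one_mul, Nat.sub_zero, hW0]
    calc W m i ≤ c * w i := hcw i
      _ ≤ s ^ m * w i := mul_le_mul_of_nonneg_right hsm (hw i).le
  rw [hMv, hsv, hshift]
  linarith

lemma keyContraction {n : ℕ} (F : Fin n → MvPolynomial (Fin n) ℝ)
    (hF : mspNonneg F) (hsc : mspStronglyConnected F)
    (μ : Fin n → ℝ) (hμ0 : 0 ≤ μ) (hfix : mspEval F μ = μ)
    (hleast : ∀ y : Fin n → ℝ, 0 ≤ y → mspEval F y = y → μ ≤ y)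
    (x : Fin n → ℝ) (hx0 : 0 ≤ x) (hxμ : ∀ i, x i < μ i) :
    ∃ (v : Fin n → ℝ) (s : ℝ), (∀ i, 0 < v i) ∧ 0 ≤ s ∧ s < 1 ∧
      ∀ i, (mspJac F x).mulVec v i ≤ s * v i := by
  classical
  have hμpos : ∀ i, 0 < μ i := fun i => lt_of_le_of_lt (hx0 i) (hxμ i)
  -- midpoint
  set z : Fin n → ℝ := fun i => (x i + μ i) / 2 with hz
  have hz0 : ∀ i, 0 < z i := fun i => by
    have h1 : (0:ℝ) ≤ x i := hx0 i
    have h2 := hμpos i; simp only [hz]; linarith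
  have hxz : ∀ i, x i ≤ z i := fun i => by
    have := hxμ i; simp only [hz]; linarith
  have hzμ : ∀ i, z i < μ i := fun i => by
    have := hxμ i; simp only [hz]; linarith
  obtain ⟨k, hk⟩ := kleene_reaches hF hμ0 hfix hleast hzμ
  set κ : Fin n → ℝ := kleeneSeq F k with hκ
  have hκ0 : ∀ i, 0 < κ i := fun i => lt_trans (hz0 i) (hk i)
  have hκnn : ∀ i, 0 ≤ κ i := fun i => (hκ0 i).le
  have hκμ : ∀ i, κ i ≤ μ i := fun i => kleene_le_mu hF hμ0 hfix k i
  have hxκ : ∀ i, x i ≤ κ i := fun i => le_of_lt (lt_of_le_of_lt (hxz i) (hk i))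
  have hfκκ : ∀ i, κ i ≤ mspEval F κ i := by
    intro i
    have h := kleene_mono hF i (Nat.le_succ k)
    simp only at h
    rwa [kleene_succ] at h
  -- dichotomy
  by_cases hκeq : ∀ i, κ i = μ i
  · -- kleene sequence reaches μ exactly; degenerate case
    -- minimal k0 with kleeneSeq F k0 = μ
    have hex : ∃ k', ∀ i, kleeneSeq F k' i = μ i := ⟨k, hκeq⟩
    set k0 := Nat.find hex with hk0
    have hk0spec : ∀ i, kleeneSeq F k0 i = μ i := Nat.find_spec hex
    rcases Nat.eq_zero_or_pos n with hn | hn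
    · subst hn
      exact ⟨fun _ => 1, 1/2, fun i => i.elim0, by norm_num, by norm_num, fun i => i.elim0⟩
    have hi1 : Nonempty (Fin n) := ⟨⟨0, hn⟩⟩
    obtain ⟨i1⟩ := hi1
    have hk0pos : 0 < k0 := by
      rcases Nat.eq_zero_or_pos k0 with h0 | h0
      · exfalso
        have := hk0spec i1
        rw [h0] at this
        simp [kleeneSeq] at this
        have := hμpos i1
        linarith
      · exact h0
    set κ' : Fin n → ℝ := kleeneSeq F (k0 - 1) with hκ'
    have hκ'ne : ¬ ∀ i, κ' i = μ i := Nat.find_min hex (Nat.sub_lt hk0pos one_pos)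
    have hκ'nn : ∀ i, 0 ≤ κ' i := kleene_nonneg hF _
    have hκ'μ : ∀ i, κ' i ≤ μ i := fun i => kleene_le_mu hF hμ0 hfix _ i
    have hfκ' : mspEval F κ' = kleeneSeq F k0 := by
      rw [hκ', ← kleene_succ, Nat.sub_add_cancel hk0pos]
    set y : Fin n → ℝ := fun i => max (z i) (κ' i) with hy
    have hy0 : ∀ i, 0 < y i := fun i => lt_max_of_lt_left (hz0 i)
    have hynn : ∀ i, 0 ≤ y i := fun i => (hy0 i).le
    have hyμ : ∀ i, y i ≤ μ i := fun i => max_le (hzμ i).le (hκ'μ i)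
    have hfy : ∀ i, mspEval F y i = μ i := by
      intro i
      refine le_antisymm ?_ ?_
      · calc mspEval F y i ≤ mspEval F μ i := mspEval_mono hF hynn hyμ i
          _ = μ i := by rw [hfix]
      · calc μ i = kleeneSeq F k0 i := (hk0spec i).symm
          _ = mspEval F κ' i := by rw [hfκ']
          _ ≤ mspEval F y i := mspEval_mono hF hκ'nn (fun i => le_max_right _ _) i
    have hyne : ∃ j, y j < μ j := by
      by_contra hco
      push_neg at hco
      apply hκ'ne
      intro i
      have h1 : max (z i) (κ' i) = μ i := le_antisymm (hyμ i) (hco i)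
      rcases max_cases (z i) (κ' i) with ⟨he, _⟩ | ⟨he, _⟩
      · exfalso; rw [he] at h1; exact absurd h1 (ne_of_lt (hzμ i))
      · rw [he] at h1; exact h1
    obtain ⟨j, hj⟩ := hyne
    -- Taylor at y gives (Jac at y).mulVec (μ - y) = 0
    have htay : ∀ i, ∑ j', eval y (pderiv j' (F i)) * (μ j' - y j') = 0 := by
      intro i
      have h1 := taylorLB (hF i) hynn hyμ
      have h2 : eval y (F i) = μ i := hfy i
      have h3 : eval μ (F i) = μ i := congrFun hfix i
      have h4 : ∑ j', eval y (pderiv j' (F i)) * (μ j' - y j') ≤ 0 := by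
        rw [h2, h3] at h1; linarith
      refine le_antisymm h4 (Finset.sum_nonneg fun j' _ => ?_)
      exact mul_nonneg (evalNonneg (pderivNonneg (hF i) j') hynn)
        (sub_nonneg.2 (hyμ j'))
    have hnodep : ∀ i, ¬ mspDep F i j := by
      intro i hdep
      have hpos : 0 < eval y (pderiv j (F i)) * (μ j - y j) :=
        mul_pos (evalPos (pderivNonneg (hF i) j) hdep hy0) (sub_pos.2 hj)
      have hle : eval y (pderiv j (F i)) * (μ j - y j)
          ≤ ∑ j', eval y (pderiv j' (F i)) * (μ j' - y j') := by
        refine Finset.single_le_sum (f := fun j' => eval y (pderiv j' (F i)) * (μ j' - y j'))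
          (fun j' _ => ?_) (Finset.mem_univ j)
        exact mul_nonneg (evalNonneg (pderivNonneg (hF i) j') hynn)
          (sub_nonneg.2 (hyμ j'))
      rw [htay i] at hle
      linarith
    have hall : ∀ i : Fin n, i = j := by
      intro i
      by_contra hne
      rcases Relation.ReflTransGen.cases_tail (hsc i j) with h | ⟨c, _, hcj⟩
      · exact hne h.symm
      · exact hnodep c hcj
    have hzero : ∀ i j', (mspJac F x) i j' = 0 := by
      intro i j'
      have hij : i = j := hall i
      have hj'j : j' = j := hall j'
      have : pderiv j (F j) = 0 := by
        by_contra hne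
        exact hnodep j hne
      show eval x (pderiv j' (F i)) = 0
      rw [hij, hj'j, this, map_zero]
    refine ⟨fun _ => 1, 1/2, fun _ => one_pos, by norm_num, by norm_num, fun i => ?_⟩
    have : (mspJac F x).mulVec (fun _ => 1) i = 0 := by
      show ∑ j', (mspJac F x) i j' * 1 = 0
      exact Finset.sum_eq_zero fun j' _ => by rw [hzero i j', zero_mul]
    rw [this]
    norm_num
  · -- main case : κ ≠ μ
    push_neg at hκeq
    set M : Matrix (Fin n) (Fin n) ℝ := mspJac F κ with hM
    have hM0 : ∀ i j, 0 ≤ M i j := fun i j =>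
      evalNonneg (pderivNonneg (hF i) j) hκnn
    have hedge : ∀ i j, mspDep F i j → 0 < M i j := fun i j hdep =>
      evalPos (pderivNonneg (hF i) j) hdep hκ0
    set w : Fin n → ℝ := fun i => μ i - κ i with hw
    have hw0 : ∀ i, 0 ≤ w i := fun i => sub_nonneg.2 (hκμ i)
    have htay : ∀ i, M.mulVec w i ≤ μ i - mspEval F κ i := by
      intro i
      have h1 := taylorLB (hF i) hκnn hκμ
      have h3 : eval μ (F i) = μ i := congrFun hfix i
      have h2 : M.mulVec w i = ∑ j', eval κ (pderiv j' (F i)) * (μ j' - κ j') := rfl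
      rw [h2]
      have : eval κ (F i) = mspEval F κ i := rfl
      linarith
    have hMw : ∀ i, M.mulVec w i ≤ w i := fun i => by
      have h1 := htay i
      have h2 := hfκκ i
      simp only [hw]
      linarith
    -- strictness
    have hfne : ∃ i0, κ i0 < mspEval F κ i0 := by
      by_contra hco
      push_neg at hco
      have hfixκ : mspEval F κ = κ := funext fun i => le_antisymm (hco i) (hfκκ i)
      have := hleast κ (fun i => hκnn i) hfixκ
      obtain ⟨i, hi⟩ := hκeq
      exact hi (le_antisymm (hκμ i) (this i))
    obtain ⟨i0, hi0⟩ := hfne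
    have hstrict : M.mulVec w i0 < w i0 := by
      have h1 := htay i0
      simp only [hw]
      linarith
    -- w is strictly positive
    have hwpos : ∀ i, 0 < w i := by
      intro i
      rcases lt_or_eq_of_le (hw0 i) with h | h
      · exact h
      · exfalso
        have hall0 : ∀ j', w j' = 0 := fun j' =>
          zeroProp hM0 hedge hw0 hMw (hsc i j') h.symm
        obtain ⟨i', hi'⟩ := hκeq
        have := hall0 i'
        simp only [hw] at this
        exact hi' (by linarith)
    obtain ⟨v, s, hv, hs0, hs1, hMv⟩ := existsContraction hM0 hedge hsc hwpos hMw hstrict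
    refine ⟨v, s, hv, hs0, hs1, fun i => ?_⟩
    calc (mspJac F x).mulVec v i = ∑ j', (mspJac F x) i j' * v j' := rfl
      _ ≤ ∑ j', M i j' * v j' := by
          refine Finset.sum_le_sum fun j' _ => ?_
          refine mul_le_mul_of_nonneg_right ?_ (hv j').le
          exact evalMono (pderivNonneg (hF i) j') hx0 hxκ
      _ = M.mulVec v i := rfl
      _ ≤ s * v i := hMv i

/-- for a strongly connected MSP and 0 ≤ x ≺ μf, the spectral
radius of f'(x) is < 1; hence Id − f'(x) is invertible and its inverse is the
Neumann series Σ f'(x)^k. -/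
theorem scMSP_jacobian_spectral_radius_lt_one {n : ℕ}
    (F : Fin n → MvPolynomial (Fin n) ℝ)
    (hF : mspNonneg F) (hclean : mspClean F) (hsc : mspStronglyConnected F)
    (μ : Fin n → ℝ)
    (hμ0 : 0 ≤ μ) (hfix : mspEval F μ = μ)
    (hleast : ∀ y : Fin n → ℝ, 0 ≤ y → mspEval F y = y → μ ≤ y)
    (x : Fin n → ℝ) (hx0 : 0 ≤ x) (hxμ : ∀ i, x i < μ i) :
    (∀ l : ℂ, hasComplexEigenvalue (mspJac F x) l → ‖l‖ < 1) ∧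
    IsUnit (1 - mspJac F x) ∧
    HasSum (fun k : ℕ => mspJac F x ^ k) (1 - mspJac F x)⁻¹ := by
  
  classical
  obtain ⟨v, s, hv, hs0, hs1, hAv⟩ := keyContraction F hF hsc μ hμ0 hfix hleast x hx0 hxμ
  set A := mspJac F x with hA
  have hA0 : ∀ i j, 0 ≤ A i j := fun i j =>
    evalNonneg (pderivNonneg (hF i) j) (fun i => hx0 i)
  -- eigenvalue bound
  have heig : ∀ l : ℂ, hasComplexEigenvalue A l → ‖l‖ < 1 := by
    rintro l ⟨wc, hw0, heq⟩
    set u : Fin n → ℝ := fun i => ‖wc i‖ with hu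
    have hiex : ∃ i, wc i ≠ 0 := by
      by_contra h; push_neg at h; exact hw0 (funext h)
    obtain ⟨iw, hiw⟩ := hiex
    haveI : Nonempty (Fin n) := ⟨iw⟩
    obtain ⟨im, _, hmax⟩ := Finset.exists_max_image Finset.univ (fun i => u i / v i)
      ⟨iw, Finset.mem_univ iw⟩
    set t := u im / v im with ht
    have htpos : 0 < t :=
      lt_of_lt_of_le (div_pos (norm_pos_iff.2 hiw) (hv iw)) (hmax iw (Finset.mem_univ iw))
    have hub : ∀ j, u j ≤ t * v j := fun j => (div_le_iff₀ (hv j)).1 (hmax j (Finset.mem_univ j))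
    have h1 : ‖l‖ * u im ≤ ∑ j, A im j * u j := by
      have h3 : (A.map (algebraMap ℝ ℂ)).mulVec wc im = ∑ j, (A im j : ℂ) * wc j := by
        simp [Matrix.mulVec, dotProduct, Matrix.map_apply]
      calc ‖l‖ * u im = ‖l * wc im‖ := by rw [norm_mul]
        _ = ‖∑ j, (A im j : ℂ) * wc j‖ := by
            rw [← h3, heq]; rfl
        _ ≤ ∑ j, ‖(A im j : ℂ) * wc j‖ := norm_sum_le _ _
        _ = ∑ j, A im j * u j := by
            refine Finset.sum_congr rfl fun j _ => ?_
            rw [norm_mul, Complex.norm_real, Real.norm_of_nonneg (hA0 im j)]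
    have h4 : ∑ j, A im j * u j ≤ t * (s * v im) := by
      calc ∑ j, A im j * u j ≤ ∑ j, A im j * (t * v j) :=
            Finset.sum_le_sum fun j _ => mul_le_mul_of_nonneg_left (hub j) (hA0 im j)
        _ = t * ∑ j, A im j * v j := by
            rw [Finset.mul_sum]; exact Finset.sum_congr rfl fun j _ => by ring
        _ = t * A.mulVec v im := rfl
        _ ≤ t * (s * v im) := mul_le_mul_of_nonneg_left (hAv im) htpos.le
    have h5 : u im = t * v im := by
      rw [ht, div_mul_cancel₀ _ (hv im).ne']
    have h7 : ‖l‖ * (t * v im) ≤ s * (t * v im) := by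
      calc ‖l‖ * (t * v im) = ‖l‖ * u im := by rw [h5]
        _ ≤ t * (s * v im) := le_trans h1 h4
        _ = s * (t * v im) := by ring
    have h6 : ‖l‖ ≤ s := le_of_mul_le_mul_right h7 (mul_pos htpos (hv im))
    linarith
  -- norm / geometric series part
  letI instN : NormedRing (Matrix (Fin n) (Fin n) ℝ) := Matrix.linftyOpNormedRing
  letI instA : NormedAlgebra ℝ (Matrix (Fin n) (Fin n) ℝ) := Matrix.linftyOpNormedAlgebra
  haveI : CompleteSpace (Matrix (Fin n) (Fin n) ℝ) := FiniteDimensional.complete ℝ _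
  set d : Matrix (Fin n) (Fin n) ℝ := Matrix.diagonal v with hd
  set e : Matrix (Fin n) (Fin n) ℝ := Matrix.diagonal (fun i => (v i)⁻¹) with he
  have hde : d * e = 1 := by
    rw [hd, he, Matrix.diagonal_mul_diagonal,
      show (fun i => v i * (v i)⁻¹) = fun _ => (1:ℝ) from
        funext fun i => mul_inv_cancel₀ (hv i).ne', Matrix.diagonal_one]
  have hed : e * d = 1 := by
    rw [hd, he, Matrix.diagonal_mul_diagonal,
      show (fun i => (v i)⁻¹ * v i) = fun _ => (1:ℝ) from
        funext fun i => inv_mul_cancel₀ (hv i).ne', Matrix.diagonal_one]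
  set B : Matrix (Fin n) (Fin n) ℝ := e * A * d with hB
  have hBij : ∀ i j, B i j = (v i)⁻¹ * A i j * v j := by
    intro i j
    rw [hB, Matrix.mul_diagonal, Matrix.diagonal_mul]
  have hBrow : ∀ i, ∑ j, B i j ≤ s := by
    intro i
    have h1 : ∑ j, B i j = (v i)⁻¹ * ∑ j, A i j * v j := by
      rw [Finset.mul_sum]
      exact Finset.sum_congr rfl fun j _ => by rw [hBij]; ring
    rw [h1]
    have h2 : (A.mulVec v) i = ∑ j, A i j * v j := rfl
    calc (v i)⁻¹ * ∑ j, A i j * v j ≤ (v i)⁻¹ * (s * v i) := by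
          refine mul_le_mul_of_nonneg_left ?_ (inv_nonneg.2 (hv i).le)
          rw [← h2]; exact hAv i
      _ = s := by
          rw [← mul_assoc, mul_comm ((v i)⁻¹) s, mul_assoc, inv_mul_cancel₀ (hv i).ne', mul_one]
  have hBnorm : ‖B‖ ≤ s := by
    rw [Matrix.linfty_opNorm_def]
    have hsup : ((Finset.univ : Finset (Fin n)).sup fun i => ∑ j, ‖B i j‖₊) ≤ s.toNNReal := by
      refine Finset.sup_le fun i _ => ?_
      rw [← NNReal.coe_le_coe, NNReal.coe_sum, Real.coe_toNNReal s hs0]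
      calc ∑ j, (‖B i j‖₊ : ℝ) = ∑ j, B i j := by
            refine Finset.sum_congr rfl fun j _ => ?_
            rw [coe_nnnorm, Real.norm_of_nonneg]
            rw [hBij]
            exact mul_nonneg (mul_nonneg (inv_nonneg.2 (hv i).le) (hA0 i j)) (hv j).le
        _ ≤ s := hBrow i
    calc ((Finset.univ.sup fun i => ∑ j, ‖B i j‖₊ : NNReal) : ℝ)
        ≤ (s.toNNReal : ℝ) := NNReal.coe_le_coe.2 hsup
      _ = s := Real.coe_toNNReal s hs0
  have hBlt : ‖B‖ < 1 := lt_of_le_of_lt hBnorm hs1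
  have hsummable : Summable (fun k : ℕ => B ^ k) := summable_geometric_of_norm_lt_one hBlt
  set S : Matrix (Fin n) (Fin n) ℝ := ∑' k : ℕ, B ^ k with hS
  have hSl : (1 - B) * S = 1 := mul_neg_geom_series B hBlt
  have hAd : A = d * B * e := by
    have h : d * (e * A * d) * e = (d * e) * A * (d * e) := by noncomm_ring
    rw [hB, h, hde, one_mul, mul_one]
  have hpow : ∀ k : ℕ, A ^ k = d * B ^ k * e := by
    intro k
    induction k with
    | zero => rw [pow_zero, pow_zero, mul_one, hde]
    | succ k ih =>
        rw [pow_succ, pow_succ, ih]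
        conv_lhs => rw [hAd]
        have h : d * B ^ k * e * (d * B * e) = d * B ^ k * (e * d) * B * e := by noncomm_ring
        rw [h, hed, mul_one, mul_assoc d (B ^ k) B]
  have hone : (1 : Matrix (Fin n) (Fin n) ℝ) - A = d * (1 - B) * e := by
    have h : d * (1 - B) * e = d * e - d * B * e := by noncomm_ring
    rw [h, hde, ← hAd]
  set T : Matrix (Fin n) (Fin n) ℝ := d * S * e with hT
  have hTl : (1 - A) * T = 1 := by
    rw [hone, hT]
    have h : d * (1 - B) * e * (d * S * e) = d * (1 - B) * (e * d) * S * e := by noncomm_ring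
    rw [h, hed, mul_one, mul_assoc d (1 - B) S, hSl, mul_one, hde]
  have hUnit : IsUnit (1 - A) := by
    have hSr : S * (1 - B) = 1 := geom_series_mul_neg B hBlt
    have hTr : T * (1 - A) = 1 := by
      rw [hone, hT]
      have h : d * S * e * (d * (1 - B) * e) = d * S * (e * d) * (1 - B) * e := by noncomm_ring
      rw [h, hed, mul_one, mul_assoc d S (1 - B), hSr, mul_one, hde]
    exact ⟨⟨1 - A, T, hTl, hTr⟩, rfl⟩
  have hinv : (1 - A)⁻¹ = T := Matrix.inv_eq_right_inv hTl
  have hsum : HasSum (fun k : ℕ => A ^ k) T := by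
    have h := (hsummable.hasSum.mul_left d).mul_right e
    rw [show (fun k : ℕ => d * B ^ k * e) = fun k : ℕ => A ^ k from
      funext fun k => (hpow k).symm] at h
    exact h
  exact ⟨heig, hUnit, by rw [hinv]; exact hsum⟩
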